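/- Suppose a replica commits B via a direct two-chain: qc certifies B, qc' certifies B'' with qc'.view = qc.view + 1, and qc' was built from votes of at least 2f+1 replicas who each knew qc. Then for any subsequent view change gathering NEW-VIEW messages from any 2f+1 replicas, every AggQC contains a QC with view ≥ qc.view, so the highest QC in the AggQC extends B or equals qc. -/
import Mathlib


/-- Direct two-chain commit and view change: a set `R1` of at least `2f+1`
replicas has highest-QC view at least `v` (the view of the QC certifying the
committed block `B`). Honest replicas report their true highest-QC views. Then for
any NEW-VIEW quorum `R2` of at least `2f+1` replicas (out of `n = 3f+1`, at most
`f` Byzantine), the maximum reported view over `R2` is at least `v`. -/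
theorem direct_two_chain_view_change {R : Type*} [DecidableEq R]
    (f v : ℕ) (N Byz R1 R2 : Finset R)
    (highView report : R → ℕ)
    (hN : N.card = 3 * f + 1)
    (hByz : Byz ⊆ N) (hByzcard : Byz.card ≤ f)
    (hR1 : R1 ⊆ N) (hR1card : 2 * f + 1 ≤ R1.card)
    (hR2 : R2 ⊆ N) (hR2card : 2 * f + 1 ≤ R2.card)
    (hknow : ∀ r ∈ R1, r ∉ Byz → v ≤ highView r)
    (hreport : ∀ r ∈ N, r ∉ Byz → report r = highView r) :
    v ≤ R2.sup report := by
  have hunion : (R1 ∪ R2).card ≤ 3 * f + 1 := hN ▸ Finset.card_le_card (Finset.union_subset hR1 hR2)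
  have hint : f + 1 ≤ (R1 ∩ R2).card := by
    have := Finset.card_union_add_card_inter R1 R2
    omega
  have hne : ¬ (R1 ∩ R2 ⊆ Byz) := fun h =>
    absurd (Finset.card_le_card h) (by omega)
  obtain ⟨r, hr, hrB⟩ := Finset.not_subset.mp hne
  have hr1 := Finset.mem_of_mem_inter_left hr
  have hr2 := Finset.mem_of_mem_inter_right hr
  calc v ≤ highView r := hknow r hr1 hrB
    _ = report r := (hreport r (hR2 hr2) hrB).symm
    _ ≤ R2.sup report := Finset.le_sup hr2
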